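/- Let Φ : ℝ → ℝ be odd, twice continuously differentiable on ℝ \ {0}, with Φ'(x) > 0 for x ≠ 0, lim_{x→0} |Φ'(x)| = ∞, and lim_{x→0} |2Φ'(x)^3 / Φ''(x)| = 1. Then lim_{x→0⁺} 2Φ(x)Φ'(x) = 1. -/

import Mathlib

open Filter Set

/-- Definition 2: Differentiator Generating Function. -/
structure IsDGF (Φ : ℝ → ℝ) : Prop where
  continuous : Continuous Φ
  odd : ∀ x, Φ (-x) = -Φ x
  diff : ∀ x ≠ 0, DifferentiableAt ℝ Φ x
  diff' : ∀ x ≠ 0, DifferentiableAt ℝ (deriv Φ) x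
  cont' : ContinuousOn (deriv Φ) {(0:ℝ)}ᶜ
  cont'' : ContinuousOn (deriv (deriv Φ)) {(0:ℝ)}ᶜ
  pos : ∀ x ≠ 0, 0 < deriv Φ x
  blowup : Tendsto (fun x => |deriv Φ x|) (nhdsWithin 0 {(0:ℝ)}ᶜ) atTop
  ratio : Tendsto (fun x => |2 * (deriv Φ x)^3 / deriv (deriv Φ) x|)
      (nhdsWithin 0 {(0:ℝ)}ᶜ) (nhds 1)

lemma Ioi_le_compl : nhdsWithin (0:ℝ) (Set.Ioi 0) ≤ nhdsWithin 0 {(0:ℝ)}ᶜ :=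
  nhdsWithin_mono 0 (fun _ hx => ne_of_gt hx)

/-- Φ' tends to +∞ from the right. -/
lemma deriv_blowup_right (Φ : ℝ → ℝ) (hΦ : IsDGF Φ) :
    Tendsto (fun x => deriv Φ x) (nhdsWithin 0 (Set.Ioi 0)) atTop := by
  have h := hΦ.blowup.mono_left Ioi_le_compl
  refine h.congr' ?_
  filter_upwards [self_mem_nhdsWithin] with x hx
  exact abs_of_pos (hΦ.pos x (ne_of_gt hx))

/-- Eventually Φ'' < 0 on the right of 0. -/
lemma second_deriv_neg (Φ : ℝ → ℝ) (hΦ : IsDGF Φ) :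
    ∀ᶠ x in nhdsWithin (0:ℝ) (Set.Ioi 0), deriv (deriv Φ) x < 0 := by
  -- eventually Φ'' ≠ 0
  have hne : ∀ᶠ x in nhdsWithin (0:ℝ) (Set.Ioi 0), deriv (deriv Φ) x ≠ 0 := by
    have h := (hΦ.ratio.mono_left Ioi_le_compl).eventually
      (eventually_gt_nhds (by norm_num : (1:ℝ)/2 < 1))
    filter_upwards [h] with x hx hzero
    rw [hzero, div_zero, abs_zero] at hx; norm_num at hx
  rw [eventually_nhdsWithin_iff] at hne
  rcases Metric.eventually_nhds_iff.mp hne with ⟨ε, hε, hball⟩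
  have hne' : ∀ x : ℝ, 0 < x → x < ε → deriv (deriv Φ) x ≠ 0 := by
    intro x hx hxε
    exact hball (by rwa [Real.dist_eq, sub_zero, abs_of_pos hx]) hx
  rw [eventually_nhdsWithin_iff, Metric.eventually_nhds_iff]
  refine ⟨ε, hε, fun {x} hx hx0 => ?_⟩
  simp only [Real.dist_eq, sub_zero] at hx
  have hx0' : (0:ℝ) < x := hx0
  have hxε : x < ε := lt_of_abs_lt hx
  -- suppose Φ'' x > 0
  by_contra hcon
  push_neg at hcon
  have hxpos : 0 < deriv (deriv Φ) x := lt_of_le_of_ne hcon (Ne.symm (hne' x hx0' hxε))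
  -- then Φ'' > 0 on (0, x]
  have hpos : ∀ z : ℝ, 0 < z → z ≤ x → 0 < deriv (deriv Φ) z := by
    intro z hz hzx
    rcases lt_or_ge 0 (deriv (deriv Φ) z) with h | h
    · exact h
    have hzne := hne' z hz (lt_of_le_of_lt hzx hxε)
    have hzneg : deriv (deriv Φ) z < 0 := lt_of_le_of_ne h hzne
    -- IVT on [z, x] gives a zero, contradiction
    have hcont : ContinuousOn (deriv (deriv Φ)) (Set.Icc z x) := by
      apply hΦ.cont''.mono
      intro y hy
      exact ne_of_gt (lt_of_lt_of_le hz hy.1)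
    have : (0:ℝ) ∈ Set.Icc (deriv (deriv Φ) z) (deriv (deriv Φ) x) :=
      ⟨le_of_lt hzneg, le_of_lt hxpos⟩
    rcases intermediate_value_Icc hzx hcont this with ⟨c, hc, hc0⟩
    exact (hne' c (lt_of_lt_of_le hz hc.1) (lt_of_le_of_lt hc.2 hxε) hc0).elim
  -- so Φ' is monotone on (0, x], hence bounded, contradicting blowup
  have hbound : ∀ y : ℝ, 0 < y → y < x → deriv Φ y < deriv Φ x := by
    intro y hy hyx
    have hmono : StrictMonoOn (deriv Φ) (Set.Icc y x) := by
      apply strictMonoOn_of_deriv_pos (convex_Icc y x)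
      · apply hΦ.cont'.mono
        intro u hu
        exact ne_of_gt (lt_of_lt_of_le hy hu.1)
      · intro u hu
        rw [interior_Icc] at hu
        exact hpos u (lt_trans hy hu.1) (le_of_lt hu.2)
    exact hmono ⟨le_refl y, le_of_lt hyx⟩ ⟨le_of_lt hyx, le_refl x⟩ hyx
  have hblow := (deriv_blowup_right Φ hΦ).eventually_gt_atTop (deriv Φ x)
  have hmem : Set.Ioo (0:ℝ) x ∈ nhdsWithin (0:ℝ) (Set.Ioi 0) := by
    apply mem_nhdsGT_iff_exists_Ioo_subset.mpr
    exact ⟨x, hx0', subset_rfl⟩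
  rcases (hblow.and (eventually_mem_set.mpr hmem)).exists with ⟨y, hy1, hy2⟩
  exact absurd hy1 (not_lt.mpr (le_of_lt (hbound y hy2.1 hy2.2)))

theorem stmt_6 (Φ : ℝ → ℝ) (hΦ : IsDGF Φ) :
    Tendsto (fun x => 2 * Φ x * deriv Φ x) (nhdsWithin 0 (Set.Ioi 0)) (nhds 1) := by
  have hΦ0 : Φ 0 = 0 := by
    have := hΦ.odd 0
    simp at this
    linarith [this]
  have hne0 : ∀ᶠ x in nhdsWithin (0:ℝ) (Set.Ioi 0), x ≠ 0 := by
    filter_upwards [self_mem_nhdsWithin] with x hx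
    exact ne_of_gt hx
  have hneg := second_deriv_neg Φ hΦ
  -- L'Hopital with f = 2Φ, g = (Φ')⁻¹
  have hff' : ∀ᶠ x in nhdsWithin (0:ℝ) (Set.Ioi 0),
      HasDerivAt (fun y => 2 * Φ y) (2 * deriv Φ x) x := by
    filter_upwards [hne0] with x hx
    exact ((hΦ.diff x hx).hasDerivAt.const_mul 2)
  have hgg' : ∀ᶠ x in nhdsWithin (0:ℝ) (Set.Ioi 0),
      HasDerivAt (fun y => (deriv Φ y)⁻¹)
        (-(deriv (deriv Φ) x) / (deriv Φ x) ^ 2) x := by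
    filter_upwards [hne0] with x hx
    exact ((hΦ.diff' x hx).hasDerivAt.inv (ne_of_gt (hΦ.pos x hx)))
  have hg' : ∀ᶠ x in nhdsWithin (0:ℝ) (Set.Ioi 0),
      -(deriv (deriv Φ) x) / (deriv Φ x) ^ 2 ≠ 0 := by
    filter_upwards [hne0, hneg] with x hx hnegx
    have h1 : (0:ℝ) < -(deriv (deriv Φ) x) := by linarith
    have h2 : (0:ℝ) < (deriv Φ x) ^ 2 := pow_pos (hΦ.pos x hx) 2
    positivity
  have hfa : Tendsto (fun y => 2 * Φ y) (nhdsWithin (0:ℝ) (Set.Ioi 0)) (nhds 0) := by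
    have hΦt : Tendsto Φ (nhdsWithin (0:ℝ) (Set.Ioi 0)) (nhds 0) := by
      have := (hΦ.continuous.tendsto 0).mono_left
        (nhdsWithin_le_nhds : nhdsWithin (0:ℝ) (Set.Ioi 0) ≤ nhds 0)
      rwa [hΦ0] at this
    simpa using hΦt.const_mul 2
  have hga : Tendsto (fun y => (deriv Φ y)⁻¹) (nhdsWithin (0:ℝ) (Set.Ioi 0)) (nhds 0) :=
    (deriv_blowup_right Φ hΦ).inv_tendsto_atTop
  have hdiv : Tendsto
      (fun x => (2 * deriv Φ x) / (-(deriv (deriv Φ) x) / (deriv Φ x) ^ 2))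
      (nhdsWithin (0:ℝ) (Set.Ioi 0)) (nhds 1) := by
    apply (hΦ.ratio.mono_left Ioi_le_compl).congr'
    filter_upwards [hne0, hneg] with x hx hnegx
    have hd : deriv (deriv Φ) x ≠ 0 := ne_of_lt hnegx
    have hp : 0 < deriv Φ x := hΦ.pos x hx
    have hratio_neg : 2 * (deriv Φ x) ^ 3 / deriv (deriv Φ) x < 0 := by
      apply div_neg_of_pos_of_neg _ hnegx
      positivity
    rw [abs_of_neg hratio_neg]
    field_simp
  have hmain := HasDerivAt.lhopital_zero_nhdsGT hff' hgg' hg' hfa hga hdiv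
  refine hmain.congr (fun x => ?_)
  rw [div_eq_mul_inv, inv_inv]
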